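/- For every θ with 1/2 < θ < 1, the function h₂(j) = jθ^{j+2} − (j+1)θ^{j+1} − (j−1)θ^{j} + jθ^{j−1} + θ − 1 has exactly one positive real root j₂(θ), and h₂(j) > 0 for all 0 < j < j₂(θ). -/

import Mathlib

open Real Filter

/-- `h₂(j) = jθ^{j+2} − (j+1)θ^{j+1} − (j−1)θ^{j} + jθ^{j−1} + θ − 1`, real exponents. -/
noncomputable def h2 (θ j : ℝ) : ℝ :=
  j * θ ^ (j + 2) - (j + 1) * θ ^ (j + 1) - (j - 1) * θ ^ j + j * θ ^ (j - 1) + θ - 1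

/-- For `1/2 < θ < 1`, `h₂` has exactly one positive real root `j₂(θ)`, and
`h₂(j) > 0` for all `0 < j < j₂(θ)`. -/
theorem h2_unique_root (θ : ℝ) (hθ : 1 / 2 < θ) (hθ1 : θ < 1) :
    ∃ j₂ : ℝ, 0 < j₂ ∧ h2 θ j₂ = 0 ∧ (∀ j : ℝ, 0 < j → h2 θ j = 0 → j = j₂) ∧
      ∀ j : ℝ, 0 < j → j < j₂ → 0 < h2 θ j := by
  have hθ0 : (0:ℝ) < θ := by linarith
  set L := Real.log θ with hLdef
  have hLneg : L < 0 := Real.log_neg hθ0 hθ1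
  set a := (1 - θ)^2 * (θ + 1) with hadef
  set b := θ * (1 - θ) with hbdef
  set c := 1 - θ with hcdef
  have hc0 : 0 < c := by simp only [hcdef]; linarith
  have ha0 : 0 < a := by
    rw [hadef]; exact mul_pos (pow_pos hc0 2) (by linarith)
  have hb0 : 0 < b := by nlinarith
  set F : ℝ → ℝ := fun j => θ ^ (j - 1) * (a * j + b) with hFdef
  -- h2 rewritten in terms of F
  have hFh : ∀ j : ℝ, h2 θ j = F j - c := by
    intro j
    have e3 : θ ^ (j + 2) = θ ^ (j-1) * θ^(3:ℕ) := by
      rw [show j+2 = (j-1)+3 by ring, Real.rpow_add hθ0,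
        show (3:ℝ) = ((3:ℕ):ℝ) by norm_num, Real.rpow_natCast]
    have e2 : θ ^ (j + 1) = θ ^ (j-1) * θ^(2:ℕ) := by
      rw [show j+1 = (j-1)+2 by ring, Real.rpow_add hθ0,
        show (2:ℝ) = ((2:ℕ):ℝ) by norm_num, Real.rpow_natCast]
    have e1 : θ ^ j = θ ^ (j-1) * θ := by
      nth_rewrite 1 [show j = (j-1) + 1 by ring]
      rw [Real.rpow_add hθ0, Real.rpow_one]
    simp only [h2, hFdef, e3, e2, e1, hadef, hbdef, hcdef]
    ring
  have hF0 : F 0 = c := by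
    simp only [hFdef, zero_sub, Real.rpow_neg_one, hbdef, hcdef]
    field_simp
    ring
  -- the derivative sign threshold
  have key : 0 < a + b * L := by
    have hinv : Real.log θ⁻¹ < θ⁻¹ - 1 :=
      Real.log_lt_sub_one_of_pos (by positivity) (by
        intro h
        have : θ = 1 := by
          field_simp at h; linarith
        linarith)
    rw [Real.log_inv] at hinv
    have hm : θ * (-L) < 1 - θ := by
      have := mul_lt_mul_of_pos_left hinv hθ0
      have hinv1 : θ * θ⁻¹ = 1 := mul_inv_cancel₀ (ne_of_gt hθ0)
      nlinarith
    nlinarith [sq_nonneg (1-θ), mul_pos hθ0 hc0]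
  set jstar := (a + b*L) / (a * (-L)) with hjsdef
  have hjs0 : 0 < jstar := div_pos key (mul_pos ha0 (neg_pos.mpr hLneg))
  -- derivative of F
  have hderiv : ∀ x : ℝ, HasDerivAt F (θ ^ (x-1) * (L * (a*x+b) + a)) x := by
    intro x
    have h1 : HasDerivAt (fun j : ℝ => θ ^ (j-1)) (θ^(x-1) * L) x := by
      have h := ((Real.hasStrictDerivAt_const_rpow hθ0 (x-1)).hasDerivAt).comp x
        ((hasDerivAt_id x).sub_const 1)
      simpa [Function.comp_def, hLdef] using h
    have h2 : HasDerivAt (fun j : ℝ => a * j + b) a x := by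
      simpa using ((hasDerivAt_id x).const_mul a).add_const b
    have := h1.mul h2
    refine this.congr_deriv ?_
    ring
  have hdiff : Differentiable ℝ F := fun x => (hderiv x).differentiableAt
  have hcont : Continuous F := hdiff.continuous
  -- monotone then antitone
  have hmono : StrictMonoOn F (Set.Icc 0 jstar) := by
    apply strictMonoOn_of_deriv_pos (convex_Icc _ _) hcont.continuousOn
    intro x hx
    rw [interior_Icc] at hx
    rw [(hderiv x).deriv]
    have hx1 : x < jstar := hx.2
    rw [hjsdef, lt_div_iff₀ (mul_pos ha0 (neg_pos.mpr hLneg))] at hx1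
    have hp : (0:ℝ) < θ ^ (x-1) := Real.rpow_pos_of_pos hθ0 _
    nlinarith
  have hanti : StrictAntiOn F (Set.Ici jstar) := by
    apply strictAntiOn_of_deriv_neg (convex_Ici _) hcont.continuousOn
    intro x hx
    rw [interior_Ici] at hx
    rw [(hderiv x).deriv]
    have hx' : jstar < x := hx
    rw [hjsdef, div_lt_iff₀ (mul_pos ha0 (neg_pos.mpr hLneg))] at hx'
    have hp : (0:ℝ) < θ ^ (x-1) := Real.rpow_pos_of_pos hθ0 _
    nlinarith
  -- limit of F at infinity is 0
  have hexp : ∀ x : ℝ, θ ^ (x-1) = θ⁻¹ * Real.exp (-(-L) * x) := by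
    intro x
    have hθinv : θ⁻¹ = Real.exp (-L) := by
      rw [Real.exp_neg, Real.exp_log hθ0]
    rw [Real.rpow_def_of_pos hθ0, hθinv, ← Real.exp_add]
    congr 1
    ring
  have hlim : Tendsto F atTop (nhds 0) := by
    have h1 : Tendsto (fun x : ℝ => x ^ (1:ℝ) * Real.exp (-(-L) * x)) atTop (nhds 0) :=
      tendsto_rpow_mul_exp_neg_mul_atTop_nhds_zero 1 (-L) (neg_pos.mpr hLneg)
    have h2 : Tendsto (fun x : ℝ => Real.exp (-(-L) * x)) atTop (nhds 0) := by
      have hcomp : Tendsto (fun x : ℝ => (-L) * x) atTop atTop :=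
        Tendsto.const_mul_atTop (neg_pos.mpr hLneg) tendsto_id
      have := Real.tendsto_exp_neg_atTop_nhds_zero.comp hcomp
      refine this.congr fun x => by simp [Function.comp, neg_mul]
    have h3 : Tendsto (fun x : ℝ =>
        θ⁻¹ * (a * (x ^ (1:ℝ) * Real.exp (-(-L)*x)) + b * Real.exp (-(-L)*x)))
        atTop (nhds 0) := by
      have := ((h1.const_mul a).add (h2.const_mul b)).const_mul θ⁻¹
      simpa using this
    refine h3.congr' ?_
    filter_upwards [eventually_gt_atTop (0:ℝ)] with x hx
    rw [hFdef]
    simp only [hexp x, Real.rpow_one]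
    ring
  -- F jstar > c
  have hFj : c < F jstar := by
    have := hmono (Set.left_mem_Icc.mpr hjs0.le) (Set.right_mem_Icc.mpr hjs0.le) hjs0
    rwa [hF0] at this
  -- existence of J with F J < c
  obtain ⟨J, hJ1, hJ2⟩ : ∃ J : ℝ, jstar < J ∧ F J < c := by
    have h := (hlim.eventually_lt_const hc0).and (eventually_gt_atTop jstar)
    obtain ⟨J, h1, h2⟩ := h.exists
    exact ⟨J, h2, h1⟩
  -- IVT on [jstar, J]
  obtain ⟨j₂, hj₂mem, hj₂⟩ := intermediate_value_Icc' hJ1.le hcont.continuousOn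
    (Set.mem_Icc.mpr ⟨hJ2.le, hFj.le⟩)
  have hj₂gt : jstar < j₂ := by
    rcases eq_or_lt_of_le hj₂mem.1 with h | h
    · exfalso; rw [← h] at hj₂; linarith
    · exact h
  have hj₂pos : 0 < j₂ := lt_trans hjs0 hj₂gt
  refine ⟨j₂, hj₂pos, by rw [hFh, hj₂]; ring, ?_, ?_⟩
  · intro j hj hroot
    have hFj' : F j = c := by
      have := hFh j; rw [hroot] at this; linarith
    rcases le_or_gt j jstar with h | h
    · exfalso
      have := hmono (Set.left_mem_Icc.mpr hjs0.le) (Set.mem_Icc.mpr ⟨hj.le, h⟩) hj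
      rw [hF0] at this
      linarith
    · exact hanti.injOn (Set.mem_Ici.mpr h.le) (Set.mem_Ici.mpr hj₂gt.le)
        (by rw [hFj', hj₂])
  · intro j hj hlt
    rw [hFh]
    have : c < F j := by
      rcases le_or_gt j jstar with h | h
      · have := hmono (Set.left_mem_Icc.mpr hjs0.le) (Set.mem_Icc.mpr ⟨hj.le, h⟩) hj
        rwa [hF0] at this
      · have := hanti (Set.mem_Ici.mpr h.le) (Set.mem_Ici.mpr hj₂gt.le) hlt
        rwa [hj₂] at this
    linarith
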